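/- Let n ≥ 1 be a natural number with n ≠ 2 and fix a real p with 1 < p < p*(n). Define g(q) = (4/(2n-(n-2)(p+1)))^q · (2n-(n-2)(q+1))^{p-1} for q ∈ (p, p*(n)). Then g is strictly decreasing on (p, p*(n)); in particular g(q) < g(p) for all q ∈ (p, p*(n)). -/

import Mathlib

/-- The auxiliary function `g(q) = (4/(2n-(n-2)(p+1)))^q · (2n-(n-2)(q+1))^{p-1}`. -/
noncomputable def g (n : ℕ) (p q : ℝ) : ℝ :=
  (4 / (2 * (n : ℝ) - ((n : ℝ) - 2) * (p + 1))) ^ q *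
    (2 * (n : ℝ) - ((n : ℝ) - 2) * (q + 1)) ^ (p - 1)

lemma g_lt_aux (n : ℕ) (p q₁ q₂ : ℝ) (hd : (n : ℝ) - 2 ≠ 0) (hp : 1 < p)
    (hsp : 0 < 2 * (n : ℝ) - ((n : ℝ) - 2) * (p + 1))
    (hs1 : 0 < 2 * (n : ℝ) - ((n : ℝ) - 2) * (q₁ + 1))
    (hs2 : 0 < 2 * (n : ℝ) - ((n : ℝ) - 2) * (q₂ + 1))
    (hq1 : p ≤ q₁) (hq12 : q₁ < q₂) :
    g n p q₂ < g n p q₁ := by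
  set d : ℝ := (n : ℝ) - 2 with hd_def
  set sp : ℝ := 2 * (n : ℝ) - d * (p + 1) with hsp_def
  set s1 : ℝ := 2 * (n : ℝ) - d * (q₁ + 1) with hs1_def
  set s2 : ℝ := 2 * (n : ℝ) - d * (q₂ + 1) with hs2_def
  set a : ℝ := 4 / sp with ha_def
  have ha : 0 < a := by positivity
  -- 4 - sp = d*(p-1)
  have h4 : 4 - sp = d * (p - 1) := by
    have : d = (n : ℝ) - 2 := hd_def
    rw [hsp_def, this]; ring
  have hane : a ≠ 1 := by
    intro h
    rw [ha_def, div_eq_one_iff_eq hsp.ne'] at h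
    have hdp : d * (p - 1) = 0 := by linarith
    rcases mul_eq_zero.1 hdp with h' | h'
    · exact hd h'
    · linarith
  -- log a < (p-1)*d/sp
  have h1 : Real.log a < (p - 1) * d / sp := by
    have hlt := Real.log_lt_sub_one_of_pos ha hane
    have : a - 1 = (p - 1) * d / sp := by
      rw [ha_def, eq_div_iff hsp.ne']
      field_simp
      linarith [h4]
    linarith
  -- d*(q₂-q₁)/s1 ≤ log s1 - log s2
  have h2 : d * (q₂ - q₁) / s1 ≤ Real.log s1 - Real.log s2 := by
    have hlt := Real.log_le_sub_one_of_pos (div_pos hs2 hs1)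
    rw [Real.log_div hs2.ne' hs1.ne'] at hlt
    have hs12 : s1 - s2 = d * (q₂ - q₁) := by rw [hs1_def, hs2_def]; ring
    have : s2 / s1 - 1 = -(d * (q₂ - q₁)) / s1 := by
      rw [div_sub' hs1.ne']
      congr 1
      linarith
    rw [this, neg_div] at hlt
    linarith
  -- d/sp ≤ d/s1
  have h3 : d / sp ≤ d / s1 := by
    rw [div_le_div_iff₀ hsp hs1]
    have hsps1 : sp - s1 = d * (q₁ - p) := by rw [hsp_def, hs1_def]; ring
    nlinarith [mul_nonneg (mul_self_nonneg d) (sub_nonneg.2 hq1)]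
  -- key inequality on logs
  have key : q₂ * Real.log a + (p - 1) * Real.log s2
      < q₁ * Real.log a + (p - 1) * Real.log s1 := by
    have hq : 0 < q₂ - q₁ := by linarith
    have hp1 : 0 < p - 1 := by linarith
    have c1 : (q₂ - q₁) * Real.log a < (q₂ - q₁) * ((p - 1) * d / sp) :=
      (mul_lt_mul_iff_right₀ hq).2 h1
    have c2 : (q₂ - q₁) * ((p - 1) * d / sp) ≤ (q₂ - q₁) * ((p - 1) * d / s1) := by
      apply mul_le_mul_of_nonneg_left _ hq.le
      have : (p - 1) * d / sp = (p - 1) * (d / sp) := by ring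
      rw [this]
      have : (p - 1) * d / s1 = (p - 1) * (d / s1) := by ring
      rw [this]
      exact mul_le_mul_of_nonneg_left h3 hp1.le
    have c3 : (q₂ - q₁) * ((p - 1) * d / s1)
        ≤ (p - 1) * (Real.log s1 - Real.log s2) := by
      have := mul_le_mul_of_nonneg_left h2 hp1.le
      calc (q₂ - q₁) * ((p - 1) * d / s1) = (p - 1) * (d * (q₂ - q₁) / s1) := by ring
        _ ≤ (p - 1) * (Real.log s1 - Real.log s2) := this
    nlinarith [c1, c2, c3]
  have hg2 : g n p q₂ = Real.exp (q₂ * Real.log a + (p - 1) * Real.log s2) := by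
    rw [g, Real.rpow_def_of_pos ha, Real.rpow_def_of_pos hs2, ← Real.exp_add]
    congr 1; ring
  have hg1 : g n p q₁ = Real.exp (q₁ * Real.log a + (p - 1) * Real.log s1) := by
    rw [g, Real.rpow_def_of_pos ha, Real.rpow_def_of_pos hs1, ← Real.exp_add]
    congr 1; ring
  rw [hg1, hg2]
  exact Real.exp_lt_exp.2 key

/-- For `n ≥ 1`, `n ≠ 2` and `1 < p < p*(n)`, the function `g` is strictly decreasing
on `(p, p*(n))` (the upper bound conditions are vacuous for `n = 1` where
`p*(n) = ∞`); in particular `g(q) < g(p)` for all `q ∈ (p, p*(n))`. -/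
theorem g_strictAnti (n : ℕ) (hn : 1 ≤ n) (hn2 : n ≠ 2) (p : ℝ) (hp : 1 < p)
    (hpstar : 3 ≤ n → p < ((n : ℝ) + 2) / ((n : ℝ) - 2)) :
    (∀ q₁ q₂ : ℝ, p < q₁ → q₁ < q₂ → (3 ≤ n → q₂ < ((n : ℝ) + 2) / ((n : ℝ) - 2)) →
      g n p q₂ < g n p q₁) ∧
    (∀ q : ℝ, p < q → (3 ≤ n → q < ((n : ℝ) + 2) / ((n : ℝ) - 2)) →
      g n p q < g n p p) := by
  have hd : (n : ℝ) - 2 ≠ 0 := by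
    intro h
    exact hn2 (by exact_mod_cast (by linarith : (n : ℝ) = 2))
  have hn13 : n = 1 ∨ 3 ≤ n := by omega
  have hs : ∀ q : ℝ, 1 < q → (3 ≤ n → q < ((n : ℝ) + 2) / ((n : ℝ) - 2)) →
      0 < 2 * (n : ℝ) - ((n : ℝ) - 2) * (q + 1) := by
    intro q hq hqstar
    rcases hn13 with h1 | h3
    · subst h1; push_cast; linarith
    · have h2 : (2 : ℝ) < (n : ℝ) := by exact_mod_cast (by omega : 2 < n)
      have := hqstar h3
      rw [lt_div_iff₀ (by linarith)] at this
      nlinarith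
  have hsp := hs p hp hpstar
  constructor
  · intro q₁ q₂ hpq1 hq12 hq2star
    exact g_lt_aux n p q₁ q₂ hd hp hsp
      (hs q₁ (by linarith) (fun h3 => by linarith [hq2star h3]))
      (hs q₂ (by linarith) hq2star) hpq1.le hq12
  · intro q hpq hqstar
    exact g_lt_aux n p p q hd hp hsp hsp (hs q (by linarith) hqstar) le_rfl hpq
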